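/- Every formula of arbitrary arrow update model logic (modal logic plus arrow update modalities [U,o] and the arbitrary arrow update quantifier [↑]) is semantically equivalent to a formula of basic multi-agent modal logic. Consequently, M,s ⊨ [↑]φ iff M,s ⊨ [U,o]φ for every arrow update (U,o), without any restriction on the source and target conditions of U. -/

import Mathlib

namespace AAUML

/-- Formulas of arbitrary arrow update model logic over atoms `P` and agents `A`.
An arrow update model is encoded as a finite list of arrows
`(agent, source outcome, source condition, target outcome, target condition)`,
with outcomes drawn from `ℕ`; `upd U o φ` is `[U,o]φ` and `all φ` is `[↑]φ`. -/
inductive Form (P A : Type) : Type where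
  | atom : P → Form P A
  | neg  : Form P A → Form P A
  | and  : Form P A → Form P A → Form P A
  | box  : A → Form P A → Form P A
  | upd  : List (A × ℕ × Form P A × ℕ × Form P A) → ℕ → Form P A → Form P A
  | all  : Form P A → Form P A

/-- An arrow: agent, source outcome, source condition, target outcome, target condition. -/
abbrev Arrow (P A : Type) := A × ℕ × Form P A × ℕ × Form P A

/-- Formulas of basic multi-agent modal logic: no update modality, no quantifier. -/
inductive Form.Modal {P A : Type} : Form P A → Prop
  | atom (p : P) : Form.Modal (.atom p)
  | neg {φ : Form P A} : Form.Modal φ → Form.Modal (.neg φ)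
  | and {φ ψ : Form P A} : Form.Modal φ → Form.Modal ψ → Form.Modal (.and φ ψ)
  | box (a : A) {φ : Form P A} : Form.Modal φ → Form.Modal (.box a φ)

/-- Formulas of arrow update model logic (no arbitrary-update quantifier anywhere,
including inside the conditions of arrow update models). -/
inductive Form.NoQuant {P A : Type} : Form P A → Prop
  | atom (p : P) : Form.NoQuant (.atom p)
  | neg {φ : Form P A} : Form.NoQuant φ → Form.NoQuant (.neg φ)
  | and {φ ψ : Form P A} : Form.NoQuant φ → Form.NoQuant ψ → Form.NoQuant (.and φ ψ)
  | box (a : A) {φ : Form P A} : Form.NoQuant φ → Form.NoQuant (.box a φ)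
  | upd {U : List (Arrow P A)} (o : ℕ) {φ : Form P A} : Form.NoQuant φ →
      (∀ ar ∈ U, Form.NoQuant ar.2.2.1) → (∀ ar ∈ U, Form.NoQuant ar.2.2.2.2) →
      Form.NoQuant (.upd U o φ)

/-- Propositional formulas (no modalities at all). -/
inductive Form.Prp {P A : Type} : Form P A → Prop
  | atom (p : P) : Form.Prp (.atom p)
  | neg {φ : Form P A} : Form.Prp φ → Form.Prp (.neg φ)
  | and {φ ψ : Form P A} : Form.Prp φ → Form.Prp ψ → Form.Prp (.and φ ψ)

/-- A relational (Kripke) model. -/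
structure KModel (P A : Type) : Type 1 where
  World : Type
  R : A → World → World → Prop
  V : World → P → Prop

variable {P A : Type}

/-- Satisfaction for basic modal formulas (junk value `False` on updates/quantifiers;
only used on modal formulas). -/
def msat (M : KModel P A) : M.World → Form P A → Prop
  | s, .atom p => M.V s p
  | s, .neg φ => ¬ msat M s φ
  | s, .and φ ψ => msat M s φ ∧ msat M s ψ
  | s, .box a φ => ∀ t, M.R a s t → msat M t φ
  | _, .upd _ _ _ => False
  | _, .all _ => False

/-- Some arrow of `U` for agent `a` from outcome `o` to outcome `o'` has its (modal)
source condition true at `s` and its target condition true at `s'`. -/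
def marrowOK (M : KModel P A) (U : List (Arrow P A)) (a : A) (o o' : ℕ)
    (s s' : M.World) : Prop :=
  ∃ ψ ψ', (a, o, ψ, o', ψ') ∈ U ∧ msat M s ψ ∧ msat M s' ψ'

/-- All source and target conditions of `U` are basic modal formulas. -/
def ModalArrows (U : List (Arrow P A)) : Prop :=
  ∀ ar ∈ U, Form.Modal ar.2.2.1 ∧ Form.Modal ar.2.2.2.2

mutual
  /-- Satisfaction `M,s ⊨ φ`.  The case `upd U o φ` is interpreted in the product
  model `M*U` (inlined); `all φ` quantifies over all arrow update models with basic
  modal source and target conditions. -/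
  def Form.sat : (M : KModel P A) → M.World → Form P A → Prop
    | M, s, .atom p => M.V s p
    | M, s, .neg φ => ¬ Form.sat M s φ
    | M, s, .and φ ψ => Form.sat M s φ ∧ Form.sat M s ψ
    | M, s, .box a φ => ∀ t, M.R a s t → Form.sat M t φ
    | M, s, .upd U o φ =>
        Form.sat ⟨M.World × ℕ,
          fun a x y => M.R a x.1 y.1 ∧ satList M U a x.2 y.2 x.1 y.1,
          fun x p => M.V x.1 p⟩ (s, o) φ
    | M, s, .all φ => ∀ (U : List (Arrow P A)) (o : ℕ), ModalArrows U →
        Form.sat ⟨M.World × ℕ,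
          fun a x y => M.R a x.1 y.1 ∧ marrowOK M U a x.2 y.2 x.1 y.1,
          fun x p => M.V x.1 p⟩ (s, o) φ
  termination_by M s φ => sizeOf φ

  /-- Some arrow of the list, for agent `a`, from `o` to `o'`, has its source condition
  true at `s` and its target condition true at `s'`. -/
  def satList : (M : KModel P A) → List (Arrow P A) → A → ℕ → ℕ → M.World → M.World → Prop
    | _, [], _, _, _, _, _ => False
    | M, (b, o1, ψ, o2, ψ') :: rest, a, o, o', s, s' =>
        (b = a ∧ o1 = o ∧ o2 = o' ∧ Form.sat M s ψ ∧ Form.sat M s' ψ') ∨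
        satList M rest a o o' s s'
  termination_by M U a o o' s s' => sizeOf U
end

/-- The product `M*U` of a relational model and an arrow update model. -/
def prodModel (M : KModel P A) (U : List (Arrow P A)) : KModel P A :=
  ⟨M.World × ℕ,
   fun a x y => M.R a x.1 y.1 ∧ satList M U a x.2 y.2 x.1 y.1,
   fun x p => M.V x.1 p⟩

def Valid (φ : Form P A) : Prop := ∀ (M : KModel P A) (s : M.World), Form.sat M s φ

def Form.or (φ ψ : Form P A) : Form P A := .neg (.and (.neg φ) (.neg ψ))
def Form.imp (φ ψ : Form P A) : Form P A := .neg (.and φ (.neg ψ))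
def Form.dia (a : A) (φ : Form P A) : Form P A := .neg (.box a (.neg φ))
/-- `⟨U,o⟩φ` -/
def Form.diaUpd (U : List (Arrow P A)) (o : ℕ) (φ : Form P A) : Form P A :=
  .neg (.upd U o (.neg φ))
/-- `⟨↑⟩φ` -/
def Form.ex (φ : Form P A) : Form P A := .neg (.all (.neg φ))
/-- A canonical tautology. -/
def Form.top [Inhabited P] : Form P A := .neg (.and (.atom default) (.neg (.atom default)))
/-- Finite conjunction. -/
def Form.conj [Inhabited P] : List (Form P A) → Form P A
  | [] => Form.top
  | φ :: rest => .and φ (Form.conj rest)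

/-- `Z` is a bisimulation between `M` and `N`. -/
def IsBisim (M N : KModel P A) (Z : M.World → N.World → Prop) : Prop :=
  ∀ s s', Z s s' →
    (∀ p, M.V s p ↔ N.V s' p) ∧
    (∀ a t, M.R a s t → ∃ t', N.R a s' t' ∧ Z t t') ∧
    (∀ a t', N.R a s' t' → ∃ t, M.R a s t ∧ Z t t')

/-- Bisimilarity of pointed models. -/
def Bisimilar (M : KModel P A) (s : M.World) (N : KModel P A) (s' : N.World) : Prop :=
  ∃ Z, IsBisim M N Z ∧ Z s s'

/-- An action model: actions with accessibility relations and preconditions. -/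
structure AModel (P A : Type) : Type 1 where
  Action : Type
  rel : A → Action → Action → Prop
  pre : Action → Form P A

/-- The restricted modal product `M ⊗ E`. -/
def actProd (M : KModel P A) (E : AModel P A) : KModel P A :=
  ⟨{x : M.World × E.Action // Form.sat M x.1 (E.pre x.2)},
   fun a x y => M.R a x.1.1 y.1.1 ∧ E.rel a x.1.2 y.1.2,
   fun x p => M.V x.1.1 p⟩

/-- `M,s ⊨ [E,e]φ`: if the precondition of `e` holds at `s` then `φ` holds at `(s,e)`
in `M ⊗ E`. -/
def actSat (M : KModel P A) (E : AModel P A) (s : M.World) (e : E.Action)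
    (φ : Form P A) : Prop :=
  ∀ h : Form.sat M s (E.pre e), Form.sat (actProd M E) ⟨(s, e), h⟩ φ


variable {P A : Type}

attribute [reducible] prodModel

/-! ### Basic satisfaction lemmas -/

@[simp] lemma sat_atom (M : KModel P A) (s : M.World) (p : P) :
    Form.sat M s (.atom p) ↔ M.V s p := by rw [Form.sat]

@[simp] lemma sat_neg (M : KModel P A) (s : M.World) (φ : Form P A) :
    Form.sat M s (.neg φ) ↔ ¬ Form.sat M s φ := by rw [Form.sat]

@[simp] lemma sat_and (M : KModel P A) (s : M.World) (φ ψ : Form P A) :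
    Form.sat M s (.and φ ψ) ↔ Form.sat M s φ ∧ Form.sat M s ψ := by rw [Form.sat]

@[simp] lemma sat_box (M : KModel P A) (s : M.World) (a : A) (φ : Form P A) :
    Form.sat M s (.box a φ) ↔ ∀ t, M.R a s t → Form.sat M t φ := by rw [Form.sat]

lemma sat_upd (M : KModel P A) (s : M.World) (U : List (Arrow P A)) (o : ℕ) (φ : Form P A) :
    Form.sat M s (.upd U o φ) ↔ Form.sat (prodModel M U) (s, o) φ := by
  rw [Form.sat]

@[simp] lemma satList_nil (M : KModel P A) (a : A) (o o' : ℕ) (s t : M.World) :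
    ¬ satList M [] a o o' s t := by rw [satList]; exact id

lemma satList_cons (M : KModel P A) (a b : A) (o o' o1 o2 : ℕ) (s t : M.World)
    (σ τ : Form P A) (rest : List (Arrow P A)) :
    satList M ((b,o1,σ,o2,τ) :: rest) a o o' s t ↔
      ((b = a ∧ o1 = o ∧ o2 = o' ∧ Form.sat M s σ ∧ Form.sat M t τ) ∨
        satList M rest a o o' s t) := by
  rw [satList]

lemma satList_iff (M : KModel P A) (U : List (Arrow P A)) (a : A) (o o' : ℕ)
    (s t : M.World) :
    satList M U a o o' s t ↔
      ∃ σ τ, (a, o, σ, o', τ) ∈ U ∧ Form.sat M s σ ∧ Form.sat M t τ := by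
  induction U with
  | nil => simp
  | cons ar rest ih =>
    obtain ⟨b, o1, σ, o2, τ⟩ := ar
    rw [satList_cons, ih]
    constructor
    · rintro (⟨rfl, rfl, rfl, h1, h2⟩ | ⟨σ', τ', hm, h1, h2⟩)
      · exact ⟨σ, τ, List.mem_cons_self, h1, h2⟩
      · exact ⟨σ', τ', List.mem_cons_of_mem _ hm, h1, h2⟩
    · rintro ⟨σ', τ', hm, h1, h2⟩
      rcases List.mem_cons.1 hm with h | h
      · left; injection h with e1 e2; injection e2 with e2 e3; injection e3 with e3 e4
        injection e4 with e4 e5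
        exact ⟨e1.symm, e2.symm, e4.symm, e3 ▸ h1, e5 ▸ h2⟩
      · right; exact ⟨σ', τ', h, h1, h2⟩

lemma msat_eq {φ : Form P A} (h : φ.Modal) :
    ∀ (M : KModel P A) (s : M.World), msat M s φ ↔ Form.sat M s φ := by
  induction h with
  | atom p => intro M s; rw [msat, sat_atom]
  | neg _ ih => intro M s; rw [msat, sat_neg]; exact not_congr (ih M s)
  | and _ _ ih1 ih2 => intro M s; rw [msat, sat_and]; exact and_congr (ih1 M s) (ih2 M s)
  | box a _ ih =>
    intro M s; rw [msat, sat_box]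
    exact forall_congr' fun t => imp_congr Iff.rfl (ih M t)

lemma marrow_eq {U : List (Arrow P A)} (hU : ModalArrows U) (M : KModel P A)
    (a : A) (o o' : ℕ) (s t : M.World) :
    marrowOK M U a o o' s t ↔ satList M U a o o' s t := by
  rw [satList_iff, marrowOK]
  constructor
  · rintro ⟨σ, τ, hm, h1, h2⟩
    exact ⟨σ, τ, hm, (msat_eq (hU _ hm).1 M s).1 h1, (msat_eq (hU _ hm).2 M t).1 h2⟩
  · rintro ⟨σ, τ, hm, h1, h2⟩
    exact ⟨σ, τ, hm, (msat_eq (hU _ hm).1 M s).2 h1, (msat_eq (hU _ hm).2 M t).2 h2⟩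

/-- Congruence for satisfaction in models with the same worlds and valuation. -/
lemma sat_congrR {W : Type} (R R' : A → W → W → Prop) (V : W → P → Prop)
    (h : ∀ a x y, R a x y ↔ R' a x y) (x : W) (φ : Form P A) :
    Form.sat ⟨W, R, V⟩ x φ ↔ Form.sat ⟨W, R', V⟩ x φ := by
  have : R = R' := by funext a u v; exact propext (h a u v)
  rw [this]

lemma sat_all (M : KModel P A) (s : M.World) (φ : Form P A) :
    Form.sat M s (.all φ) ↔
      ∀ (U : List (Arrow P A)) (o : ℕ), ModalArrows U →
        Form.sat (prodModel M U) (s, o) φ := by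
  rw [Form.sat]
  refine forall_congr' fun U => forall_congr' fun o => ?_
  constructor
  · intro h hU
    have e : (fun a (x y : M.World × ℕ) => M.R a x.1 y.1 ∧ marrowOK M U a x.2 y.2 x.1 y.1)
        = (fun a (x y : M.World × ℕ) => M.R a x.1 y.1 ∧ satList M U a x.2 y.2 x.1 y.1) := by
      funext a x y
      exact propext (and_congr Iff.rfl (marrow_eq hU M a x.2 y.2 x.1 y.1))
    have := h hU
    rw [e] at this
    exact this
  · intro h hU
    have e : (fun a (x y : M.World × ℕ) => M.R a x.1 y.1 ∧ marrowOK M U a x.2 y.2 x.1 y.1)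
        = (fun a (x y : M.World × ℕ) => M.R a x.1 y.1 ∧ satList M U a x.2 y.2 x.1 y.1) := by
      funext a x y
      exact propext (and_congr Iff.rfl (marrow_eq hU M a x.2 y.2 x.1 y.1))
    rw [e]
    exact h hU
/-! ### Derived connectives and syntactic measures -/

def Form.someAtom : Form P A → P
  | .atom p => p
  | .neg φ => φ.someAtom
  | .and φ _ => φ.someAtom
  | .box _ φ => φ.someAtom
  | .upd _ _ φ => φ.someAtom
  | .all φ => φ.someAtom

def topF (p₀ : P) : Form P A := .neg (.and (.atom p₀) (.neg (.atom p₀)))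
def botF (p₀ : P) : Form P A := .neg (topF p₀)

def conjF (p₀ : P) : List (Form P A) → Form P A
  | [] => topF p₀
  | φ :: rest => .and φ (conjF p₀ rest)

def disjF (p₀ : P) : List (Form P A) → Form P A
  | [] => botF p₀
  | φ :: rest => .neg (.and (.neg φ) (.neg (disjF p₀ rest)))

def Form.depth : Form P A → ℕ
  | .atom _ => 0
  | .neg φ => φ.depth
  | .and φ ψ => max φ.depth ψ.depth
  | .box _ φ => φ.depth + 1
  | .upd _ _ _ => 0
  | .all _ => 0

@[simp] lemma sat_topF (M : KModel P A) (s : M.World) (p₀ : P) :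
    Form.sat M s (topF p₀) := by
  simp [topF]

@[simp] lemma sat_botF (M : KModel P A) (s : M.World) (p₀ : P) :
    ¬ Form.sat M s (botF p₀) := by simp [botF]

lemma sat_conjF (M : KModel P A) (s : M.World) (p₀ : P) (L : List (Form P A)) :
    Form.sat M s (conjF p₀ L) ↔ ∀ φ ∈ L, Form.sat M s φ := by
  induction L with
  | nil => simp [conjF]
  | cons φ rest ih => simp [conjF, ih]

lemma sat_disjF (M : KModel P A) (s : M.World) (p₀ : P) (L : List (Form P A)) :
    Form.sat M s (disjF p₀ L) ↔ ∃ φ ∈ L, Form.sat M s φ := by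
  induction L with
  | nil => simp [disjF]
  | cons φ rest ih =>
    simp only [disjF, sat_neg, sat_and, List.mem_cons]
    rw [ih]
    constructor
    · intro h
      rcases not_and_or.1 h with h2 | h2
      · exact ⟨φ, Or.inl rfl, not_not.1 h2⟩
      · obtain ⟨ψ, hm, hs⟩ := not_not.1 h2
        exact ⟨ψ, Or.inr hm, hs⟩
    · rintro ⟨ψ, (rfl | hm), hs⟩
      · rintro ⟨h1, h2⟩; exact h1 hs
      · rintro ⟨h1, h2⟩; exact h2 ⟨ψ, hm, hs⟩

lemma Modal_topF (p₀ : P) : (topF p₀ : Form P A).Modal :=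
  .neg (.and (.atom p₀) (.neg (.atom p₀)))

lemma Modal_botF (p₀ : P) : (botF p₀ : Form P A).Modal := .neg (Modal_topF p₀)

lemma Modal_conjF (p₀ : P) (L : List (Form P A)) (h : ∀ φ ∈ L, φ.Modal) :
    (conjF p₀ L).Modal := by
  induction L with
  | nil => exact Modal_topF p₀
  | cons φ rest ih =>
    exact .and (h φ (List.mem_cons_self)) (ih fun ψ hm => h ψ (List.mem_cons_of_mem _ hm))

lemma Modal_disjF (p₀ : P) (L : List (Form P A)) (h : ∀ φ ∈ L, φ.Modal) :
    (disjF p₀ L).Modal := by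
  induction L with
  | nil => exact Modal_botF p₀
  | cons φ rest ih =>
    exact .neg (.and (.neg (h φ (List.mem_cons_self)))
      (.neg (ih fun ψ hm => h ψ (List.mem_cons_of_mem _ hm))))

@[simp] lemma depth_topF (p₀ : P) : (topF p₀ : Form P A).depth = 0 := rfl
@[simp] lemma depth_botF (p₀ : P) : (botF p₀ : Form P A).depth = 0 := rfl

lemma depth_disjF_lt (p₀ : P) (L : List (Form P A)) {d : ℕ} (hd : 0 < d)
    (h : ∀ φ ∈ L, φ.depth < d) : (disjF p₀ L).depth < d := by
  induction L with
  | nil => simpa [disjF] using hd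
  | cons φ rest ih =>
    have h1 := h φ (List.mem_cons_self)
    have h2 := ih fun ψ hm => h ψ (List.mem_cons_of_mem _ hm)
    simp only [disjF, Form.depth]
    omega

lemma Form.Prp.toModal {π : Form P A} (h : π.Prp) : π.Modal := by
  induction h with
  | atom p => exact .atom p
  | neg _ ih => exact .neg ih
  | and _ _ ih1 ih2 => exact .and ih1 ih2

lemma prp_sat {π : Form P A} (h : π.Prp) (M N : KModel P A) (s : M.World) (t : N.World)
    (hV : ∀ p, M.V s p ↔ N.V t p) : Form.sat M s π ↔ Form.sat N t π := by
  induction h with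
  | atom p => simpa using hV p
  | neg _ ih => simp [ih]
  | and _ _ ih1 ih2 => simp [ih1, ih2]

lemma prp_prod {π : Form P A} (h : π.Prp) (M : KModel P A) (U : List (Arrow P A))
    (s : M.World) (o : ℕ) : Form.sat (prodModel M U) (s, o) π ↔ Form.sat M s π :=
  prp_sat h (prodModel M U) M (s, o) s fun _ => Iff.rfl

lemma sat_dia (M : KModel P A) (s : M.World) (a : A) (φ : Form P A) :
    Form.sat M s (Form.dia a φ) ↔ ∃ t, M.R a s t ∧ Form.sat M t φ := by
  simp [Form.dia]

lemma sat_imp (M : KModel P A) (s : M.World) (φ ψ : Form P A) :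
    Form.sat M s (Form.imp φ ψ) ↔ (Form.sat M s φ → Form.sat M s ψ) := by
  simp [Form.imp]

/-- Transfer of satisfaction along equivalent arrow lists. -/
lemma prod_congr (M : KModel P A) (U U' : List (Arrow P A))
    (h : ∀ a o o' s t, satList M U a o o' s t ↔ satList M U' a o o' s t)
    (x : M.World × ℕ) (φ : Form P A) :
    Form.sat (prodModel M U) x φ ↔ Form.sat (prodModel M U') x φ := by
  have e : (fun a (x y : M.World × ℕ) => M.R a x.1 y.1 ∧ satList M U a x.2 y.2 x.1 y.1)
      = (fun a (x y : M.World × ℕ) => M.R a x.1 y.1 ∧ satList M U' a x.2 y.2 x.1 y.1) := by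
    funext a x y
    exact propext (and_congr Iff.rfl (h a x.2 y.2 x.1 y.1))
  exact iff_of_eq (congrArg (fun R => Form.sat ⟨M.World × ℕ, R, fun x p => M.V x.1 p⟩ x φ) e)

/-- Modal formulas transfer between a product block and its original update. -/
lemma block_transfer (M : KModel P A) (V W : List (Arrow P A)) (f : ℕ → ℕ)
    (h1 : ∀ ar ∈ W, (ar.1, f ar.2.1, ar.2.2.1, f ar.2.2.2.1, ar.2.2.2.2) ∈ V)
    (h2 : ∀ ar ∈ V, ∀ n, ar.2.1 = f n →
      ∃ ar0 ∈ W, ar0.2.1 = n ∧ ar = (ar0.1, f ar0.2.1, ar0.2.2.1, f ar0.2.2.2.1, ar0.2.2.2.2))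
    {φ : Form P A} (hφ : φ.Modal) :
    ∀ (w : M.World) (n : ℕ),
      Form.sat (prodModel M V) (w, f n) φ ↔ Form.sat (prodModel M W) (w, n) φ := by
  induction hφ with
  | atom p => intro w n; simp only [sat_atom]
  | neg _ ih => intro w n; simp only [sat_neg]; rw [ih]
  | and _ _ ih1 ih2 => intro w n; simp only [sat_and]; rw [ih1, ih2]
  | box a _ ih =>
    intro w n
    simp only [sat_box]
    constructor
    · rintro h ⟨v, m⟩ ⟨hR, hsl⟩
      obtain ⟨σ, τ, hm, hσ, hτ⟩ := (satList_iff M W a n m w v).1 hsl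
      have hmem := h1 _ hm
      have hV : Form.sat (prodModel M V) (v, f m) _ := h (v, f m)
        ⟨hR, (satList_iff M V a (f n) (f m) w v).2 ⟨σ, τ, hmem, hσ, hτ⟩⟩
      exact (ih v m).1 hV
    · rintro h ⟨v, m⟩ ⟨hR, hsl⟩
      obtain ⟨σ, τ, hm, hσ, hτ⟩ := (satList_iff M V a (f n) m w v).1 hsl
      obtain ⟨ar0, hm0, hsrc, heq⟩ := h2 _ hm n rfl
      obtain ⟨b, n1, σ0, n2, τ0⟩ := ar0
      simp only [Prod.mk.injEq] at heq
      obtain ⟨e1, e2, e3, e4, e5⟩ := heq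
      simp only at hsrc
      subst e1; subst e3; subst e5
      rw [hsrc] at hm0
      have hW : Form.sat (prodModel M W) (v, n2) _ := h (v, n2)
        ⟨hR, (satList_iff M W a n n2 w v).2 ⟨σ, τ, hm0, hσ, hτ⟩⟩
      rw [e4]
      exact (ih v n2).2 hW
/-! ### Phase 1: elimination of update modalities on modal formulas -/

theorem updElim : ∀ {χ : Form P A}, χ.Modal → ∀ (U : List (Arrow P A)), ModalArrows U →
    ∀ o, ∃ θ : Form P A, θ.Modal ∧
      ∀ (M : KModel P A) (s : M.World),
        Form.sat (prodModel M U) (s, o) χ ↔ Form.sat M s θ := by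
  intro χ hχ
  induction hχ with
  | atom p =>
    intro U hU o
    exact ⟨.atom p, .atom p, fun M s => by simp only [sat_atom]⟩
  | neg h ih =>
    intro U hU o
    obtain ⟨θ, hθ, he⟩ := ih U hU o
    exact ⟨.neg θ, .neg hθ, fun M s => by rw [sat_neg, sat_neg, he M s]⟩
  | and h1 h2 ih1 ih2 =>
    intro U hU o
    obtain ⟨θ1, hθ1, he1⟩ := ih1 U hU o
    obtain ⟨θ2, hθ2, he2⟩ := ih2 U hU o
    exact ⟨.and θ1 θ2, .and hθ1 hθ2,
      fun M s => by rw [sat_and, sat_and, he1 M s, he2 M s]⟩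
  | @box a φ hφ ih =>
    intro U hU o
    have p₀ : P := φ.someAtom
    have key : ∀ L : List (Arrow P A),
        (∀ ar ∈ L, (ar.2.2.1 : Form P A).Modal ∧ (ar.2.2.2.2 : Form P A).Modal) →
        ∃ θ : Form P A, θ.Modal ∧
          ∀ (M : KModel P A) (s : M.World),
            (∀ (t : M.World) (o2 : ℕ), M.R a s t → satList M L a o o2 s t →
              Form.sat (prodModel M U) (t, o2) φ) ↔ Form.sat M s θ := by
      intro L
      induction L with
      | nil =>
        intro _
        refine ⟨topF p₀, Modal_topF p₀, fun M s => ?_⟩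
        refine iff_of_true (fun t o2 _ h => absurd h (satList_nil M a o o2 s t)) (sat_topF M s p₀)
      | cons ar rest ihL =>
        intro hL
        obtain ⟨θr, hθr, her⟩ := ihL fun ar' hm => hL ar' (List.mem_cons_of_mem _ hm)
        obtain ⟨b, o1, σ, o2, τ⟩ := ar
        have hσ : σ.Modal := (hL _ (List.mem_cons_self)).1
        have hτ : τ.Modal := (hL _ (List.mem_cons_self)).2
        by_cases hba : b = a ∧ o1 = o
        · obtain ⟨rfl, rfl⟩ := hba
          obtain ⟨θ2, hθ2, he2⟩ := ih U hU o2
          refine ⟨.and (σ.imp (.box b (τ.imp θ2))) θr,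
            .and (.neg (.and hσ (.neg (.box b (.neg (.and hτ (.neg hθ2))))))) hθr,
            fun M s => ?_⟩
          rw [sat_and]
          constructor
          · intro h
            refine ⟨?_, (her M s).1 fun t o2' hRt hsl => h t o2' hRt
              ((satList_cons M b b o1 o2' o1 o2 s t σ τ rest).2 (Or.inr hsl))⟩
            rw [sat_imp]; intro hs
            rw [sat_box]; intro t hRt
            rw [sat_imp]; intro ht
            exact (he2 M t).1 (h t o2 hRt
              ((satList_cons M b b o1 o2 o1 o2 s t σ τ rest).2 (Or.inl ⟨rfl, rfl, rfl, hs, ht⟩)))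
          · rintro ⟨h1, h2⟩ t o2' hRt hsl
            rcases (satList_cons M b b o1 o2' o1 o2 s t σ τ rest).1 hsl with
              ⟨_, _, ho, hs, ht⟩ | hrest
            · have := (sat_imp M t τ θ2).1 ((sat_box M s b (τ.imp θ2)).1
                ((sat_imp M s σ _).1 h1 hs) t hRt) ht
              rw [← ho]
              exact (he2 M t).2 this
            · exact (her M s).2 h2 t o2' hRt hrest
        · refine ⟨θr, hθr, fun M s => ?_⟩
          rw [← her M s]
          constructor
          · intro h t o2' hRt hsl
            exact h t o2' hRt ((satList_cons M a b o o2' o1 o2 s t σ τ rest).2 (Or.inr hsl))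
          · intro h t o2' hRt hsl
            rcases (satList_cons M a b o o2' o1 o2 s t σ τ rest).1 hsl with ⟨hb, ho, _⟩ | hrest
            · exact absurd ⟨hb, ho⟩ hba
            · exact h t o2' hRt hrest
    obtain ⟨θ, hθ, he⟩ := key U hU
    refine ⟨θ, hθ, fun M s => ?_⟩
    rw [← he M s, sat_box]
    constructor
    · intro h t o2 hRt hsl
      exact h (t, o2) ⟨hRt, hsl⟩
    · rintro h ⟨t, o2⟩ ⟨hRt, hsl⟩
      exact h t o2 hRt hsl
/-! ### Normal form machinery -/

structure NClause (P A : Type) where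
  pi : Form P A
  B : List A
  Phi : A → List (Form P A)

def nablaSem (M : KModel P A) (s : M.World) (a : A) (L : List (Form P A)) : Prop :=
  (∀ ψ ∈ L, ∃ t, M.R a s t ∧ Form.sat M t ψ) ∧
  (∀ t, M.R a s t → ∃ ψ ∈ L, Form.sat M t ψ)

def NClause.csat (M : KModel P A) (s : M.World) (c : NClause P A) : Prop :=
  Form.sat M s c.pi ∧ ∀ a ∈ c.B, nablaSem M s a (c.Phi a)

def Good (d : ℕ) (c : NClause P A) : Prop :=
  c.pi.Prp ∧ ∀ a ∈ c.B, ∀ ψ ∈ c.Phi a, ψ.Modal ∧ ψ.depth < d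

def csSat (M : KModel P A) (s : M.World) (cs : List (NClause P A)) : Prop :=
  ∃ c ∈ cs, c.csat M s

lemma Good_mono {d d' : ℕ} (h : d ≤ d') {c : NClause P A} (hc : Good d c) : Good d' c :=
  ⟨hc.1, fun a ha ψ hψ => ⟨(hc.2 a ha ψ hψ).1, lt_of_lt_of_le (hc.2 a ha ψ hψ).2 h⟩⟩

def thetaMerge (p₀ : P) (Φ Ψ : List (Form P A)) : List (Form P A) :=
  Φ.map (fun φ => φ.and (disjF p₀ Ψ)) ++ Ψ.map (fun ψ => ψ.and (disjF p₀ Φ))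

lemma nabla_merge (p₀ : P) (M : KModel P A) (s : M.World) (a : A)
    (Φ Ψ : List (Form P A)) :
    nablaSem M s a (thetaMerge p₀ Φ Ψ) ↔ nablaSem M s a Φ ∧ nablaSem M s a Ψ := by
  constructor
  · rintro ⟨hdia, hbox⟩
    refine ⟨⟨fun φ hφ => ?_, fun t hRt => ?_⟩, ⟨fun ψ hψ => ?_, fun t hRt => ?_⟩⟩
    · obtain ⟨t, hRt, hs⟩ := hdia (φ.and (disjF p₀ Ψ))
        (List.mem_append_left _ (List.mem_map_of_mem hφ))
      exact ⟨t, hRt, ((sat_and M t _ _).1 hs).1⟩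
    · obtain ⟨χ, hχm, hχs⟩ := hbox t hRt
      rcases List.mem_append.1 hχm with hm | hm
      · obtain ⟨φ', hφ', rfl⟩ := List.mem_map.1 hm
        exact ⟨φ', hφ', ((sat_and M t _ _).1 hχs).1⟩
      · obtain ⟨ψ', hψ', rfl⟩ := List.mem_map.1 hm
        obtain ⟨φ', hφ', hsφ⟩ := (sat_disjF M t p₀ Φ).1 ((sat_and M t _ _).1 hχs).2
        exact ⟨φ', hφ', hsφ⟩
    · obtain ⟨t, hRt, hs⟩ := hdia (ψ.and (disjF p₀ Φ))
        (List.mem_append_right _ (List.mem_map_of_mem hψ))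
      exact ⟨t, hRt, ((sat_and M t _ _).1 hs).1⟩
    · obtain ⟨χ, hχm, hχs⟩ := hbox t hRt
      rcases List.mem_append.1 hχm with hm | hm
      · obtain ⟨φ', hφ', rfl⟩ := List.mem_map.1 hm
        obtain ⟨ψ', hψ', hsψ⟩ := (sat_disjF M t p₀ Ψ).1 ((sat_and M t _ _).1 hχs).2
        exact ⟨ψ', hψ', hsψ⟩
      · obtain ⟨ψ', hψ', rfl⟩ := List.mem_map.1 hm
        exact ⟨ψ', hψ', ((sat_and M t _ _).1 hχs).1⟩
  · rintro ⟨⟨hdia1, hbox1⟩, ⟨hdia2, hbox2⟩⟩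
    constructor
    · intro χ hχm
      rcases List.mem_append.1 hχm with hm | hm
      · obtain ⟨φ', hφ', rfl⟩ := List.mem_map.1 hm
        obtain ⟨t, hRt, hs⟩ := hdia1 φ' hφ'
        refine ⟨t, hRt, (sat_and M t _ _).2 ⟨hs, (sat_disjF M t p₀ Ψ).2 (hbox2 t hRt)⟩⟩
      · obtain ⟨ψ', hψ', rfl⟩ := List.mem_map.1 hm
        obtain ⟨t, hRt, hs⟩ := hdia2 ψ' hψ'
        refine ⟨t, hRt, (sat_and M t _ _).2 ⟨hs, (sat_disjF M t p₀ Φ).2 (hbox1 t hRt)⟩⟩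
    · intro t hRt
      obtain ⟨φ', hφ', hsφ⟩ := hbox1 t hRt
      refine ⟨φ'.and (disjF p₀ Ψ), List.mem_append_left _ (List.mem_map_of_mem hφ'),
        (sat_and M t _ _).2 ⟨hsφ, (sat_disjF M t p₀ Ψ).2 (hbox2 t hRt)⟩⟩

open Classical in
noncomputable def cAnd (p₀ : P) (c1 c2 : NClause P A) : NClause P A :=
  ⟨c1.pi.and c2.pi, c1.B ++ c2.B,
   fun a => if a ∈ c1.B then
      (if a ∈ c2.B then thetaMerge p₀ (c1.Phi a) (c2.Phi a) else c1.Phi a)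
    else c2.Phi a⟩

lemma cAnd_sat (p₀ : P) (c1 c2 : NClause P A) (M : KModel P A) (s : M.World) :
    (cAnd p₀ c1 c2).csat M s ↔ c1.csat M s ∧ c2.csat M s := by
  classical
  unfold NClause.csat cAnd
  simp only [sat_and]
  constructor
  · rintro ⟨⟨hπ1, hπ2⟩, h⟩
    refine ⟨⟨hπ1, fun a ha => ?_⟩, ⟨hπ2, fun a ha => ?_⟩⟩
    · have := h a (List.mem_append_left _ ha)
      simp only [if_pos ha] at this
      by_cases h2 : a ∈ c2.B
      · rw [if_pos h2] at this
        exact ((nabla_merge p₀ M s a _ _).1 this).1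
      · rwa [if_neg h2] at this
    · have := h a (List.mem_append_right _ ha)
      by_cases h1 : a ∈ c1.B
      · simp only [if_pos h1, if_pos ha] at this
        exact ((nabla_merge p₀ M s a _ _).1 this).2
      · rwa [if_neg h1] at this
  · rintro ⟨⟨hπ1, h1⟩, ⟨hπ2, h2⟩⟩
    refine ⟨⟨hπ1, hπ2⟩, fun a ha => ?_⟩
    by_cases hm1 : a ∈ c1.B
    · by_cases hm2 : a ∈ c2.B
      · simp only [if_pos hm1, if_pos hm2]
        exact (nabla_merge p₀ M s a _ _).2 ⟨h1 a hm1, h2 a hm2⟩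
      · simp only [if_pos hm1, if_neg hm2]
        exact h1 a hm1
    · rcases List.mem_append.1 ha with h | h
      · exact absurd h hm1
      · simp only [if_neg hm1]
        exact h2 a h

lemma depth_and (φ ψ : Form P A) : (Form.and φ ψ).depth = max φ.depth ψ.depth := rfl

lemma cAnd_good (p₀ : P) {d1 d2 : ℕ} {c1 c2 : NClause P A}
    (h1 : Good d1 c1) (h2 : Good d2 c2) : Good (max d1 d2) (cAnd p₀ c1 c2) := by
  classical
  refine ⟨.and h1.1 h2.1, fun a ha ψ hψ => ?_⟩
  simp only [cAnd] at hψ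
  have merge_case : ∀ ψ', ψ' ∈ thetaMerge p₀ (c1.Phi a) (c2.Phi a) → a ∈ c1.B → a ∈ c2.B →
      ψ'.Modal ∧ ψ'.depth < max d1 d2 := by
    intro ψ' hm hm1 hm2
    rcases List.mem_append.1 hm with h | h
    · obtain ⟨φ', hφ', rfl⟩ := List.mem_map.1 h
      have hd1 := h1.2 a hm1 φ' hφ'
      have hmo : (disjF p₀ (c2.Phi a)).Modal :=
        Modal_disjF p₀ _ fun χ hχ => (h2.2 a hm2 χ hχ).1
      have hdd : (disjF p₀ (c2.Phi a)).depth < max d1 d2 := by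
        refine depth_disjF_lt p₀ _ ?_ fun χ hχ => lt_of_lt_of_le (h2.2 a hm2 χ hχ).2 ?_
        · omega
        · omega
      refine ⟨.and hd1.1 hmo, ?_⟩
      rw [depth_and]
      have := hd1.2
      omega
    · obtain ⟨φ', hφ', rfl⟩ := List.mem_map.1 h
      have hd2 := h2.2 a hm2 φ' hφ'
      have hmo : (disjF p₀ (c1.Phi a)).Modal :=
        Modal_disjF p₀ _ fun χ hχ => (h1.2 a hm1 χ hχ).1
      have hdd : (disjF p₀ (c1.Phi a)).depth < max d1 d2 := by
        refine depth_disjF_lt p₀ _ ?_ fun χ hχ => lt_of_lt_of_le (h1.2 a hm1 χ hχ).2 ?_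
        · omega
        · omega
      refine ⟨.and hd2.1 hmo, ?_⟩
      rw [depth_and]
      have := hd2.2
      omega
  by_cases hm1 : a ∈ c1.B
  · by_cases hm2 : a ∈ c2.B
    · rw [if_pos hm1, if_pos hm2] at hψ
      exact merge_case ψ hψ hm1 hm2
    · rw [if_pos hm1, if_neg hm2] at hψ
      have := h1.2 a hm1 ψ hψ
      exact ⟨this.1, lt_of_lt_of_le this.2 (le_max_left _ _)⟩
  · rw [if_neg hm1] at hψ
    rcases List.mem_append.1 ha with h | h
    · exact absurd h hm1
    · have := h2.2 a h ψ hψ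
      exact ⟨this.1, lt_of_lt_of_le this.2 (le_max_right _ _)⟩
/-! ### The normal form theorem -/

theorem toNF (p₀ : P) : ∀ {χ : Form P A}, χ.Modal →
    ∃ cs ncs : List (NClause P A),
      (∀ c ∈ cs, Good χ.depth c) ∧ (∀ c ∈ ncs, Good χ.depth c) ∧
      ∀ (M : KModel P A) (s : M.World),
        (Form.sat M s χ ↔ csSat M s cs) ∧ (¬ Form.sat M s χ ↔ csSat M s ncs) := by
  intro χ hχ
  induction hχ with
  | atom p =>
    refine ⟨[⟨.atom p, [], fun _ => []⟩], [⟨.neg (.atom p), [], fun _ => []⟩],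
      ?_, ?_, fun M s => ?_⟩
    · rintro c hc
      rcases List.mem_singleton.1 hc with rfl
      exact ⟨.atom p, by simp⟩
    · rintro c hc
      rcases List.mem_singleton.1 hc with rfl
      exact ⟨.neg (.atom p), by simp⟩
    · constructor
      · simp [csSat, NClause.csat]
      · simp [csSat, NClause.csat]
  | @neg φ hφ ih =>
    obtain ⟨cs, ncs, hg1, hg2, he⟩ := ih
    refine ⟨ncs, cs, hg2, hg1, fun M s => ?_⟩
    refine ⟨?_, ?_⟩
    · rw [sat_neg]
      exact (he M s).2
    · rw [sat_neg, not_not]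
      exact (he M s).1
  | @and φ ψ hφ hψ ihφ ihψ =>
    obtain ⟨cs1, ncs1, hg11, hg12, he1⟩ := ihφ
    obtain ⟨cs2, ncs2, hg21, hg22, he2⟩ := ihψ
    refine ⟨cs1.flatMap (fun c1 => cs2.map (cAnd p₀ c1)), ncs1 ++ ncs2, ?_, ?_, fun M s => ?_⟩
    · intro c hc
      obtain ⟨c1, hc1, hc'⟩ := List.mem_flatMap.1 hc
      obtain ⟨c2, hc2, rfl⟩ := List.mem_map.1 hc'
      exact cAnd_good p₀ (hg11 c1 hc1) (hg21 c2 hc2)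
    · intro c hc
      rcases List.mem_append.1 hc with h | h
      · exact Good_mono (le_max_left _ _) (hg12 c h)
      · exact Good_mono (le_max_right _ _) (hg22 c h)
    · constructor
      · rw [sat_and, (he1 M s).1, (he2 M s).1]
        constructor
        · rintro ⟨⟨c1, hc1, hs1⟩, ⟨c2, hc2, hs2⟩⟩
          exact ⟨cAnd p₀ c1 c2, List.mem_flatMap.2 ⟨c1, hc1, List.mem_map.2 ⟨c2, hc2, rfl⟩⟩,
            (cAnd_sat p₀ c1 c2 M s).2 ⟨hs1, hs2⟩⟩
        · rintro ⟨c, hc, hs⟩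
          obtain ⟨c1, hc1, hc'⟩ := List.mem_flatMap.1 hc
          obtain ⟨c2, hc2, rfl⟩ := List.mem_map.1 hc'
          obtain ⟨hs1, hs2⟩ := (cAnd_sat p₀ c1 c2 M s).1 hs
          exact ⟨⟨c1, hc1, hs1⟩, ⟨c2, hc2, hs2⟩⟩
      · rw [sat_and, not_and_or, (he1 M s).2, (he2 M s).2]
        constructor
        · rintro (⟨c, hc, hs⟩ | ⟨c, hc, hs⟩)
          · exact ⟨c, List.mem_append_left _ hc, hs⟩
          · exact ⟨c, List.mem_append_right _ hc, hs⟩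
        · rintro ⟨c, hc, hs⟩
          rcases List.mem_append.1 hc with h | h
          · exact Or.inl ⟨c, h, hs⟩
          · exact Or.inr ⟨c, h, hs⟩
  | @box a φ hφ ih =>
    clear ih
    refine ⟨[⟨topF p₀, [a], fun _ => [φ]⟩, ⟨topF p₀, [a], fun _ => []⟩],
      [⟨topF p₀, [a], fun _ => [.neg φ, topF p₀]⟩], ?_, ?_, fun M s => ?_⟩
    · rintro c hc
      rcases List.mem_cons.1 hc with rfl | hc
      · refine ⟨.neg (.and (.atom p₀) (.neg (.atom p₀))), ?_⟩
        rintro b hb ψ hψ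
        rcases List.mem_singleton.1 hψ with rfl
        exact ⟨hφ, by simp [Form.depth]⟩
      · rcases List.mem_singleton.1 hc with rfl
        exact ⟨.neg (.and (.atom p₀) (.neg (.atom p₀))), by rintro b hb ψ hψ; simp at hψ⟩
    · rintro c hc
      rcases List.mem_singleton.1 hc with rfl
      refine ⟨.neg (.and (.atom p₀) (.neg (.atom p₀))), ?_⟩
      rintro b hb ψ hψ
      rcases List.mem_cons.1 hψ with rfl | hψ
      · exact ⟨.neg hφ, by simp [Form.depth]⟩
      · rcases List.mem_singleton.1 hψ with rfl
        exact ⟨Modal_topF p₀, by simp [Form.depth]⟩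
    · constructor
      · rw [sat_box]
        constructor
        · intro h
          by_cases hex : ∃ t, M.R a s t
          · refine ⟨⟨topF p₀, [a], fun _ => [φ]⟩, List.mem_cons_self, sat_topF M s p₀,
              ?_⟩
            rintro b hb
            rcases List.mem_singleton.1 hb with rfl
            obtain ⟨t, ht⟩ := hex
            exact ⟨fun ψ hψ => by
                rcases List.mem_singleton.1 hψ with rfl
                exact ⟨t, ht, h t ht⟩,
              fun t' ht' => ⟨φ, List.mem_singleton.2 rfl, h t' ht'⟩⟩
          · refine ⟨⟨topF p₀, [a], fun _ => []⟩, List.mem_cons_of_mem _ (List.mem_singleton.2 rfl),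
              sat_topF M s p₀, ?_⟩
            rintro b hb
            rcases List.mem_singleton.1 hb with rfl
            exact ⟨fun ψ hψ => absurd hψ (List.not_mem_nil),
              fun t ht => absurd ⟨t, ht⟩ hex⟩
        · rintro ⟨c, hc, hπ, hn⟩ t ht
          rcases List.mem_cons.1 hc with rfl | hc
          · obtain ⟨ψ, hψ, hsψ⟩ := (hn a (List.mem_singleton.2 rfl)).2 t ht
            rcases List.mem_singleton.1 hψ with rfl
            exact hsψ
          · rcases List.mem_singleton.1 hc with rfl
            obtain ⟨ψ, hψ, _⟩ := (hn a (List.mem_singleton.2 rfl)).2 t ht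
            exact absurd hψ (List.not_mem_nil)
      · rw [sat_box]
        push_neg
        constructor
        · rintro ⟨t, ht, hns⟩
          refine ⟨⟨topF p₀, [a], fun _ => [.neg φ, topF p₀]⟩, List.mem_singleton.2 rfl,
            sat_topF M s p₀, ?_⟩
          rintro b hb
          rcases List.mem_singleton.1 hb with rfl
          refine ⟨fun ψ hψ => ?_, fun t' ht' => ?_⟩
          · rcases List.mem_cons.1 hψ with rfl | hψ
            · exact ⟨t, ht, (sat_neg M t φ).2 hns⟩
            · rcases List.mem_singleton.1 hψ with rfl
              exact ⟨t, ht, sat_topF M t p₀⟩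
          · exact ⟨topF p₀, List.mem_cons_of_mem _ (List.mem_singleton.2 rfl), sat_topF M t' p₀⟩
        · rintro ⟨c, hc, hπ, hn⟩
          rcases List.mem_singleton.1 hc with rfl
          obtain ⟨t, ht, hs⟩ := (hn a (List.mem_singleton.2 rfl)).1 (.neg φ)
            (List.mem_cons_self)
          exact ⟨t, ht, (sat_neg M t φ).1 hs⟩
/-! ### Indexed enumeration of a list -/

def enumIdx {α : Type} : ℕ → List α → List (ℕ × α)
  | _, [] => []
  | n, a :: l => (n, a) :: enumIdx (n + 1) l

lemma enumIdx_fst_ge {α : Type} : ∀ {n : ℕ} {l : List α} {x : ℕ × α},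
    x ∈ enumIdx n l → n ≤ x.1 := by
  intro n l
  induction l generalizing n with
  | nil => intro x hx; simp [enumIdx] at hx
  | cons a l ih =>
    intro x hx
    rcases List.mem_cons.1 hx with rfl | hx
    · exact le_refl _
    · exact le_trans (Nat.le_succ _) (ih hx)

lemma enumIdx_mem {α : Type} : ∀ {n : ℕ} {l : List α} {x : ℕ × α},
    x ∈ enumIdx n l → x.2 ∈ l := by
  intro n l
  induction l generalizing n with
  | nil => intro x hx; simp [enumIdx] at hx
  | cons a l ih =>
    intro x hx
    rcases List.mem_cons.1 hx with rfl | hx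
    · exact List.mem_cons_self
    · exact List.mem_cons_of_mem _ (ih hx)

lemma enumIdx_exists {α : Type} {a : α} : ∀ {l : List α}, a ∈ l → ∀ n, ∃ i, (i, a) ∈ enumIdx n l := by
  intro l
  induction l with
  | nil => intro h; simp at h
  | cons b l ih =>
    intro h n
    rcases List.mem_cons.1 h with rfl | h
    · exact ⟨n, List.mem_cons_self⟩
    · obtain ⟨i, hi⟩ := ih h (n + 1)
      exact ⟨i, List.mem_cons_of_mem _ hi⟩

lemma enumIdx_unique {α : Type} : ∀ {n : ℕ} {l : List α} {i : ℕ} {a b : α},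
    (i, a) ∈ enumIdx n l → (i, b) ∈ enumIdx n l → a = b := by
  intro n l
  induction l generalizing n with
  | nil => intro i a b h; simp [enumIdx] at h
  | cons c l ih =>
    intro i a b h1 h2
    rcases List.mem_cons.1 h1 with e1 | h1
    · rcases List.mem_cons.1 h2 with e2 | h2
      · injection e1 with _ e1'; injection e2 with _ e2'; rw [e1', e2']
      · exfalso
        injection e1 with e1a _
        have := enumIdx_fst_ge h2
        simp at this
        omega
    · rcases List.mem_cons.1 h2 with e2 | h2
      · exfalso
        injection e2 with e2a _
        have := enumIdx_fst_ge h1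
        simp at this
        omega
      · exact ih h1 h2

/-! ### The core elimination lemma for the arbitrary arrow update quantifier on clauses -/

theorem clauseEx (p₀ : P) (c : NClause P A) {d : ℕ} (hG : Good d c)
    (M : KModel P A) (s : M.World) :
    (∃ (U : List (Arrow P A)) (o : ℕ), ModalArrows U ∧ c.csat (prodModel M U) (s, o)) ↔
    (Form.sat M s c.pi ∧ ∀ a ∈ c.B, ∀ ψ ∈ c.Phi a,
      ∃ t, M.R a s t ∧ ∃ (U : List (Arrow P A)) (o : ℕ), ModalArrows U ∧
        Form.sat (prodModel M U) (t, o) ψ) := by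
  constructor
  · rintro ⟨U, o, hMA, hπ, hnab⟩
    refine ⟨(prp_prod hG.1 M U s o).1 hπ, fun a ha ψ hψ => ?_⟩
    obtain ⟨⟨t, o'⟩, ⟨hR, _⟩, hs⟩ := (hnab a ha).1 ψ hψ
    exact ⟨t, hR, U, o', hMA, hs⟩
  · rintro ⟨hπ, H⟩
    classical
    haveI : Inhabited M.World := ⟨s⟩
    haveI : Inhabited (Form P A) := ⟨.atom p₀⟩
    choose! t hR Uc oc hMA hsat using H
    have HT : ∀ a ∈ c.B, ∀ ψ ∈ c.Phi a, ∃ θ : Form P A, θ.Modal ∧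
        ∀ (N : KModel P A) (w : N.World),
          Form.sat (prodModel N (Uc a ψ)) (w, oc a ψ) ψ ↔ Form.sat N w θ :=
      fun a ha ψ hψ => updElim (hG.2 a ha ψ hψ).1 (Uc a ψ) (hMA a ha ψ hψ) (oc a ψ)
    choose! θf hθM hθ using HT
    set J : List (A × Form P A) := c.B.flatMap (fun a => (c.Phi a).map (fun ψ => (a, ψ)))
      with hJdef
    have hJmem : ∀ j ∈ J, j.1 ∈ c.B ∧ j.2 ∈ c.Phi j.1 := by
      intro j hj
      rw [hJdef] at hj
      obtain ⟨a, ha, hj2⟩ := List.mem_flatMap.1 hj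
      obtain ⟨ψ, hψ, rfl⟩ := List.mem_map.1 hj2
      exact ⟨ha, hψ⟩
    have hJmem' : ∀ a ∈ c.B, ∀ ψ ∈ c.Phi a, (a, ψ) ∈ J := by
      intro a ha ψ hψ
      rw [hJdef]
      exact List.mem_flatMap.2 ⟨a, ha, List.mem_map.2 ⟨ψ, hψ, rfl⟩⟩
    set E : List (ℕ × (A × Form P A)) := enumIdx 0 J with hEdef
    set Uall : List (Arrow P A) := E.flatMap (fun x =>
      (x.2.1, Nat.pair 0 0, topF p₀, Nat.pair (x.1 + 1) (oc x.2.1 x.2.2), θf x.2.1 x.2.2) ::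
      (Uc x.2.1 x.2.2).map (fun ar =>
        (ar.1, Nat.pair (x.1 + 1) ar.2.1, ar.2.2.1, Nat.pair (x.1 + 1) ar.2.2.2.1, ar.2.2.2.2)))
      with hUdef
    have hUall : ∀ ar : Arrow P A, ar ∈ Uall ↔ ∃ x ∈ E,
        ar = (x.2.1, Nat.pair 0 0, topF p₀, Nat.pair (x.1 + 1) (oc x.2.1 x.2.2), θf x.2.1 x.2.2) ∨
        ∃ ar0 ∈ Uc x.2.1 x.2.2,
          ar = (ar0.1, Nat.pair (x.1 + 1) ar0.2.1, ar0.2.2.1,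
            Nat.pair (x.1 + 1) ar0.2.2.2.1, ar0.2.2.2.2) := by
      intro ar
      rw [hUdef]
      constructor
      · intro h
        obtain ⟨x, hx, h2⟩ := List.mem_flatMap.1 h
        rcases List.mem_cons.1 h2 with h3 | h3
        · exact ⟨x, hx, Or.inl h3⟩
        · obtain ⟨ar0, h4, h5⟩ := List.mem_map.1 h3
          exact ⟨x, hx, Or.inr ⟨ar0, h4, h5.symm⟩⟩
      · rintro ⟨x, hx, h2 | ⟨ar0, h4, h5⟩⟩
        · exact List.mem_flatMap.2 ⟨x, hx, h2 ▸ List.mem_cons_self⟩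
        · exact List.mem_flatMap.2 ⟨x, hx, List.mem_cons_of_mem _
            (List.mem_map.2 ⟨ar0, h4, h5.symm⟩)⟩
    have hMAall : ModalArrows Uall := by
      intro ar har
      obtain ⟨x, hx, h2⟩ := (hUall ar).1 har
      have hj := hJmem x.2 (enumIdx_mem (hEdef ▸ hx))
      rcases h2 with rfl | ⟨ar0, h0, rfl⟩
      · exact ⟨Modal_topF p₀, hθM x.2.1 hj.1 x.2.2 hj.2⟩
      · exact hMA x.2.1 hj.1 x.2.2 hj.2 ar0 h0
    have hblock : ∀ x ∈ E, ∀ {ψ' : Form P A}, ψ'.Modal → ∀ (w : M.World) (n : ℕ),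
        Form.sat (prodModel M Uall) (w, Nat.pair (x.1 + 1) n) ψ' ↔
        Form.sat (prodModel M (Uc x.2.1 x.2.2)) (w, n) ψ' := by
      intro x hx ψ' hψ' w n
      refine block_transfer M Uall (Uc x.2.1 x.2.2) (fun n => Nat.pair (x.1 + 1) n)
        ?_ ?_ hψ' w n
      · intro ar0 h0
        exact (hUall _).2 ⟨x, hx, Or.inr ⟨ar0, h0, rfl⟩⟩
      · intro ar har n' hsrc
        obtain ⟨y, hy, h2⟩ := (hUall ar).1 har
        rcases h2 with rfl | ⟨ar0, h0, rfl⟩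
        · exfalso
          simp only at hsrc
          rw [Nat.pair_eq_pair] at hsrc
          omega
        · simp only at hsrc
          rw [Nat.pair_eq_pair] at hsrc
          obtain ⟨hyx, hsrc2⟩ := hsrc
          have hyx' : y.1 = x.1 := by omega
          have hyE : (x.1, y.2) ∈ enumIdx 0 J := by
            have h' : y ∈ enumIdx 0 J := by rw [← hEdef]; exact hy
            have h'' : (y.1, y.2) ∈ enumIdx 0 J := h'
            rwa [hyx'] at h''
          have hxE : (x.1, x.2) ∈ enumIdx 0 J := by
            have h' : x ∈ enumIdx 0 J := by rw [← hEdef]; exact hx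
            exact h'
          have hy2 : y.2 = x.2 := enumIdx_unique hyE hxE
          refine ⟨ar0, ?_, hsrc2, ?_⟩
          · rw [← hy2]; exact h0
          · rw [hyx']
      -- end block
    refine ⟨Uall, Nat.pair 0 0, hMAall, (prp_prod hG.1 M Uall s _).2 hπ, ?_⟩
    intro a ha
    constructor
    · intro ψ hψ
      obtain ⟨i, hiE⟩ := enumIdx_exists (hJmem' a ha ψ hψ) 0
      have hiE' : (i, (a, ψ)) ∈ E := hEdef ▸ hiE
      refine ⟨(t a ψ, Nat.pair (i + 1) (oc a ψ)), ⟨hR a ha ψ hψ, ?_⟩, ?_⟩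
      · refine (satList_iff M Uall a (Nat.pair 0 0) (Nat.pair (i + 1) (oc a ψ)) s (t a ψ)).2
          ⟨topF p₀, θf a ψ, ?_, sat_topF M s p₀, ?_⟩
        · exact (hUall _).2 ⟨(i, (a, ψ)), hiE', Or.inl rfl⟩
        · exact (hθ a ha ψ hψ M (t a ψ)).1 (hsat a ha ψ hψ)
      · exact (hblock (i, (a, ψ)) hiE' (hG.2 a ha ψ hψ).1 (t a ψ) (oc a ψ)).2
          (hsat a ha ψ hψ)
    · rintro ⟨v, m⟩ ⟨hRv, hsl⟩
      obtain ⟨σ, τ, hmem, hσs, hτs⟩ :=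
        (satList_iff M Uall a (Nat.pair 0 0) m s v).1 hsl
      obtain ⟨x, hx, h2⟩ := (hUall _).1 hmem
      rcases h2 with heq | ⟨ar0, h0, heq⟩
      · simp only [Prod.mk.injEq] at heq
        obtain ⟨e1, _, e3, e4, e5⟩ := heq
        have hj := hJmem x.2 (enumIdx_mem (hEdef ▸ hx))
        have hψm : x.2.2 ∈ c.Phi a := by rw [e1]; exact hj.2
        refine ⟨x.2.2, hψm, ?_⟩
        have hBa : x.2.1 ∈ c.B := hj.1
        have hsatv : Form.sat (prodModel M (Uc x.2.1 x.2.2)) (v, oc x.2.1 x.2.2) x.2.2 := by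
          apply (hθ x.2.1 hBa x.2.2 hj.2 M v).2
          rw [← e5]
          exact hτs
        have := (hblock x hx (hG.2 x.2.1 hBa x.2.2 hj.2).1 v (oc x.2.1 x.2.2)).2 hsatv
        rw [e4]
        exact this
      · exfalso
        simp only [Prod.mk.injEq] at heq
        obtain ⟨_, e2, _⟩ := heq
        rw [Nat.pair_eq_pair] at e2
        omega
/-! ### Eliminating the arbitrary update quantifier -/

lemma clauseForm (p₀ : P) (c : NClause P A) {d : ℕ} (hG : Good d c)
    (g : Form P A → Form P A)
    (hg : ∀ a ∈ c.B, ∀ ψ ∈ c.Phi a, (g ψ).Modal ∧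
      ∀ (M : KModel P A) (w : M.World),
        (∃ (U : List (Arrow P A)) (o : ℕ), ModalArrows U ∧
          Form.sat (prodModel M U) (w, o) ψ) ↔ Form.sat M w (g ψ)) :
    ∃ θ : Form P A, θ.Modal ∧ ∀ (M : KModel P A) (s : M.World),
      (∃ (U : List (Arrow P A)) (o : ℕ), ModalArrows U ∧ c.csat (prodModel M U) (s, o)) ↔
        Form.sat M s θ := by
  refine ⟨c.pi.and (conjF p₀ (c.B.flatMap (fun a => (c.Phi a).map (fun ψ => Form.dia a (g ψ))))),
    ?_, ?_⟩
  · refine .and hG.1.toModal (Modal_conjF p₀ _ ?_)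
    intro φ hφ
    obtain ⟨a, ha, h2⟩ := List.mem_flatMap.1 hφ
    obtain ⟨ψ, hψ, rfl⟩ := List.mem_map.1 h2
    exact .neg (.box a (.neg (hg a ha ψ hψ).1))
  · intro M s
    rw [clauseEx p₀ c hG M s, sat_and, sat_conjF]
    constructor
    · rintro ⟨h1, h2⟩
      refine ⟨h1, fun φ hφ => ?_⟩
      obtain ⟨a, ha, h3⟩ := List.mem_flatMap.1 hφ
      obtain ⟨ψ, hψ, rfl⟩ := List.mem_map.1 h3
      obtain ⟨t, hRt, hEX⟩ := h2 a ha ψ hψ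
      rw [sat_dia]
      exact ⟨t, hRt, ((hg a ha ψ hψ).2 M t).1 hEX⟩
    · rintro ⟨h1, h2⟩
      refine ⟨h1, fun a ha ψ hψ => ?_⟩
      have h3 := h2 (Form.dia a (g ψ)) (List.mem_flatMap.2 ⟨a, ha, List.mem_map.2 ⟨ψ, hψ, rfl⟩⟩)
      rw [sat_dia] at h3
      obtain ⟨t, hRt, hgt⟩ := h3
      exact ⟨t, hRt, ((hg a ha ψ hψ).2 M t).2 hgt⟩

lemma allElimBody (p₀ : P) (χ : Form P A) (hχ : χ.Modal)
    (g : Form P A → Form P A)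
    (hgall : ∀ ψ : Form P A, ψ.Modal → ψ.depth < χ.depth → (g ψ).Modal ∧
      ∀ (M : KModel P A) (w : M.World),
        (∃ (U : List (Arrow P A)) (o : ℕ), ModalArrows U ∧
          Form.sat (prodModel M U) (w, o) ψ) ↔ Form.sat M w (g ψ)) :
    ∃ θ : Form P A, θ.Modal ∧ ∀ (M : KModel P A) (s : M.World),
      (∃ (U : List (Arrow P A)) (o : ℕ), ModalArrows U ∧
        Form.sat (prodModel M U) (s, o) χ) ↔ Form.sat M s θ := by
  classical
  haveI : Inhabited (Form P A) := ⟨.atom p₀⟩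
  obtain ⟨cs, ncs, hgood, _, he⟩ := toNF p₀ hχ
  have hclause : ∀ c ∈ cs, ∃ θ : Form P A, θ.Modal ∧
      ∀ (M : KModel P A) (s : M.World),
        (∃ (U : List (Arrow P A)) (o : ℕ), ModalArrows U ∧ c.csat (prodModel M U) (s, o)) ↔
          Form.sat M s θ := by
    intro c hc
    refine clauseForm p₀ c (hgood c hc) g fun a ha ψ hψ => ?_
    exact hgall ψ ((hgood c hc).2 a ha ψ hψ).1 ((hgood c hc).2 a ha ψ hψ).2
  choose! θc hθcM hθc using hclause
  refine ⟨disjF p₀ (cs.map θc), Modal_disjF p₀ _ ?_, fun M s => ?_⟩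
  · intro φ hφ
    obtain ⟨c, hc, rfl⟩ := List.mem_map.1 hφ
    exact hθcM c hc
  · rw [sat_disjF]
    constructor
    · rintro ⟨U, o, hMA, hs⟩
      obtain ⟨c, hc, hcs⟩ := ((he (prodModel M U) (s, o)).1).1 hs
      exact ⟨θc c, List.mem_map.2 ⟨c, hc, rfl⟩, (hθc c hc M s).1 ⟨U, o, hMA, hcs⟩⟩
    · rintro ⟨φ, hφ, hsφ⟩
      obtain ⟨c, hc, rfl⟩ := List.mem_map.1 hφ
      obtain ⟨U, o, hMA, hcs⟩ := (hθc c hc M s).2 hsφ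
      exact ⟨U, o, hMA, ((he (prodModel M U) (s, o)).1).2 ⟨c, hc, hcs⟩⟩

theorem allElim (p₀ : P) : ∀ (d : ℕ) (χ : Form P A), χ.Modal → χ.depth ≤ d →
    ∃ θ : Form P A, θ.Modal ∧ ∀ (M : KModel P A) (s : M.World),
      (∃ (U : List (Arrow P A)) (o : ℕ), ModalArrows U ∧
        Form.sat (prodModel M U) (s, o) χ) ↔ Form.sat M s θ := by
  intro d
  induction d with
  | zero =>
    intro χ hχ hd
    refine allElimBody p₀ χ hχ id fun ψ _ hlt => absurd hlt (by omega)
  | succ d ih =>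
    intro χ hχ hd
    classical
    haveI : Inhabited (Form P A) := ⟨.atom p₀⟩
    choose! g hgM hgE using ih
    refine allElimBody p₀ χ hχ g fun ψ hm hlt => ⟨hgM ψ hm (by omega), hgE ψ hm (by omega)⟩
/-! ### Replacing conditions of an update by equivalent modal ones -/

lemma modalizeU (p₀ : P) (U : List (Arrow P A))
    (hc : ∀ ar ∈ U, ∃ σ' τ' : Form P A,
      (σ'.Modal ∧ ∀ (M : KModel P A) (s : M.World), Form.sat M s ar.2.2.1 ↔ Form.sat M s σ') ∧
      (τ'.Modal ∧ ∀ (M : KModel P A) (s : M.World), Form.sat M s ar.2.2.2.2 ↔ Form.sat M s τ')) :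
    ∃ U' : List (Arrow P A), ModalArrows U' ∧
      ∀ (M : KModel P A) (a : A) (o1 o2 : ℕ) (s t : M.World),
        satList M U a o1 o2 s t ↔ satList M U' a o1 o2 s t := by
  classical
  haveI : Inhabited (Form P A) := ⟨.atom p₀⟩
  choose! F G hFp hGp using hc
  refine ⟨U.map (fun ar => (ar.1, ar.2.1, F ar, ar.2.2.2.1, G ar)), ?_, ?_⟩
  · intro ar' h
    obtain ⟨ar, har, rfl⟩ := List.mem_map.1 h
    exact ⟨(hFp ar har).1, (hGp ar har).1⟩
  · intro M a o1 o2 s t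
    rw [satList_iff, satList_iff]
    constructor
    · rintro ⟨σ, τ, hm, h1, h2⟩
      refine ⟨F (a, o1, σ, o2, τ), G (a, o1, σ, o2, τ),
        List.mem_map.2 ⟨(a, o1, σ, o2, τ), hm, rfl⟩, ?_, ?_⟩
      · exact ((hFp _ hm).2 M s).1 h1
      · exact ((hGp _ hm).2 M t).1 h2
    · rintro ⟨σ', τ', hm', h1, h2⟩
      obtain ⟨ar, har, heq⟩ := List.mem_map.1 hm'
      obtain ⟨b, p1, σ0, p2, τ0⟩ := ar
      simp only [Prod.mk.injEq] at heq
      obtain ⟨e1, e2, e3, e4, e5⟩ := heq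
      subst e1; subst e2; subst e4
      refine ⟨σ0, τ0, har, ?_, ?_⟩
      · apply ((hFp _ har).2 M s).2
        rw [e3]; exact h1
      · apply ((hGp _ har).2 M t).2
        rw [e5]; exact h2

/-! ### The main translation -/

lemma arrow_sizeOf (ar : Arrow P A) :
    sizeOf ar.2.2.1 < sizeOf ar ∧ sizeOf ar.2.2.2.2 < sizeOf ar := by
  obtain ⟨b, o1, σ, o2, τ⟩ := ar
  simp
  omega

theorem mainEquiv : ∀ (n : ℕ) (φ : Form P A), sizeOf φ ≤ n →
    ∃ φ' : Form P A, φ'.Modal ∧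
      ∀ (M : KModel P A) (s : M.World), Form.sat M s φ ↔ Form.sat M s φ' := by
  intro n
  induction n using Nat.strong_induction_on with
  | _ n ih =>
    intro φ hn
    cases φ with
    | atom p => exact ⟨.atom p, .atom p, fun M s => Iff.rfl⟩
    | neg φ =>
      have h1 : sizeOf φ < n := by simp at hn; omega
      obtain ⟨φ', hM, hE⟩ := ih _ h1 φ le_rfl
      exact ⟨.neg φ', .neg hM, fun M s => by rw [sat_neg, sat_neg, hE M s]⟩
    | and φ ψ =>
      have h1 : sizeOf φ < n := by simp at hn; omega
      have h2 : sizeOf ψ < n := by simp at hn; omega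
      obtain ⟨φ', hM1, hE1⟩ := ih _ h1 φ le_rfl
      obtain ⟨ψ', hM2, hE2⟩ := ih _ h2 ψ le_rfl
      exact ⟨.and φ' ψ', .and hM1 hM2, fun M s => by rw [sat_and, sat_and, hE1 M s, hE2 M s]⟩
    | box a φ =>
      have h1 : sizeOf φ < n := by simp at hn; omega
      obtain ⟨φ', hM, hE⟩ := ih _ h1 φ le_rfl
      refine ⟨.box a φ', .box a hM, fun M s => ?_⟩
      rw [sat_box, sat_box]
      exact forall_congr' fun t => imp_congr Iff.rfl (hE M t)
    | upd U o φ =>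
      have h1 : sizeOf φ < n := by simp at hn; omega
      have hU : sizeOf U < n := by simp at hn; omega
      obtain ⟨φ', hM, hE⟩ := ih _ h1 φ le_rfl
      have hcond : ∀ ar ∈ U, ∃ σ' τ' : Form P A,
          (σ'.Modal ∧ ∀ (M : KModel P A) (s : M.World),
            Form.sat M s ar.2.2.1 ↔ Form.sat M s σ') ∧
          (τ'.Modal ∧ ∀ (M : KModel P A) (s : M.World),
            Form.sat M s ar.2.2.2.2 ↔ Form.sat M s τ') := by
        intro ar har
        have ha := List.sizeOf_lt_of_mem har
        have hs := arrow_sizeOf ar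
        obtain ⟨σ', hM1, hE1⟩ := ih (sizeOf ar.2.2.1) (by omega) ar.2.2.1 le_rfl
        obtain ⟨τ', hM2, hE2⟩ := ih (sizeOf ar.2.2.2.2) (by omega) ar.2.2.2.2 le_rfl
        exact ⟨σ', τ', ⟨hM1, hE1⟩, ⟨hM2, hE2⟩⟩
      obtain ⟨U', hMA', hsl⟩ := modalizeU φ.someAtom U hcond
      obtain ⟨θ, hθM, hθE⟩ := updElim hM U' hMA' o
      refine ⟨θ, hθM, fun M s => ?_⟩
      rw [sat_upd, prod_congr M U U' (fun a o1 o2 s' t => hsl M a o1 o2 s' t) (s, o) φ,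
        hE (prodModel M U') (s, o), hθE M s]
    | all φ =>
      have h1 : sizeOf φ < n := by simp at hn; omega
      obtain ⟨φ', hM, hE⟩ := ih _ h1 φ le_rfl
      obtain ⟨θ, hθM, hθE⟩ := allElim φ.someAtom (Form.neg φ').depth (.neg φ') (.neg hM) le_rfl
      refine ⟨.neg θ, .neg hθM, fun M s => ?_⟩
      rw [sat_all M s φ, sat_neg, ← hθE M s]
      constructor
      · rintro h ⟨U, o, hMA, hs⟩
        rw [sat_neg] at hs
        exact hs ((hE (prodModel M U) (s, o)).1 (h U o hMA))
      · intro h U o hMA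
        by_contra hcon
        exact h ⟨U, o, hMA, (sat_neg _ _ _).2 fun hs => hcon ((hE (prodModel M U) (s, o)).2 hs)⟩

/-- every formula of arbitrary arrow update model logic is
semantically equivalent to a basic modal formula; consequently `M,s ⊨ [↑]φ` iff
`M,s ⊨ [U,o]φ` for every arrow update `(U,o)`, without any restriction on the
source and target conditions of `U`. -/
theorem aauml_reduction (P A : Type) :
    (∀ φ : Form P A, ∃ φ' : Form P A, φ'.Modal ∧
      ∀ (M : KModel P A) (s : M.World), Form.sat M s φ ↔ Form.sat M s φ') ∧
    (∀ (φ : Form P A) (M : KModel P A) (s : M.World),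
      Form.sat M s (.all φ) ↔
        ∀ (U : List (Arrow P A)) (o : ℕ), Form.sat M s (.upd U o φ)) := by
  constructor
  · exact fun φ => mainEquiv (sizeOf φ) φ le_rfl
  · intro φ M s
    constructor
    · intro h U o
      rw [sat_upd]
      have hcond : ∀ ar ∈ U, ∃ σ' τ' : Form P A,
          (σ'.Modal ∧ ∀ (M : KModel P A) (s : M.World),
            Form.sat M s ar.2.2.1 ↔ Form.sat M s σ') ∧
          (τ'.Modal ∧ ∀ (M : KModel P A) (s : M.World),
            Form.sat M s ar.2.2.2.2 ↔ Form.sat M s τ') := by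
        intro ar _
        obtain ⟨σ', hM1, hE1⟩ := mainEquiv (sizeOf ar.2.2.1) ar.2.2.1 le_rfl
        obtain ⟨τ', hM2, hE2⟩ := mainEquiv (sizeOf ar.2.2.2.2) ar.2.2.2.2 le_rfl
        exact ⟨σ', τ', ⟨hM1, hE1⟩, ⟨hM2, hE2⟩⟩
      obtain ⟨U', hMA', hsl⟩ := modalizeU φ.someAtom U hcond
      rw [prod_congr M U U' (fun a o1 o2 s' t => hsl M a o1 o2 s' t) (s, o) φ]
      exact (sat_all M s φ).1 h U' o hMA'
    · intro h
      rw [sat_all]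
      intro U o hMA
      rw [← sat_upd]
      exact h U o

end AAUML
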